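/- For ξ ∈ (0,1) fixed and ℓ = λ - ⌊λ/2⌋, the sequence of tail probabilities Pr(Bin(λ, ξ) ≤ λ - ⌊λ/2⌋) for even λ (respectively odd λ) is nondecreasing in λ, provided (1-ξ)(λ+1) ≥ (λ - ⌊λ/2⌋) + 1 for all λ in the considered range. -/

import Mathlib

open Finset

/-- `Pr(Bin(k, ξ) ≤ ℓ)`. -/
def binCdf (k : ℕ) (ξ : ℝ) (ℓ : ℕ) : ℝ :=
  ∑ i ∈ Finset.range (ℓ + 1), (k.choose i : ℝ) * ξ ^ i * (1 - ξ) ^ (k - i)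

lemma binCdf_succ_n (n k : ℕ) (hk : k ≤ n) (ξ : ℝ) :
    binCdf (n + 1) ξ k = binCdf n ξ k - (n.choose k : ℝ) * ξ ^ (k + 1) * (1 - ξ) ^ (n - k) := by
  have h : ∀ i, ℝ := fun i => if i = 0 then 0 else (n.choose (i - 1) : ℝ) * ξ ^ i * (1 - ξ) ^ (n + 1 - i)
  set H : ℕ → ℝ := fun i => if i = 0 then 0 else (n.choose (i - 1) : ℝ) * ξ ^ i * (1 - ξ) ^ (n + 1 - i) with hH
  have key : ∀ i ∈ Finset.range (k + 1),
      ((n + 1).choose i : ℝ) * ξ ^ i * (1 - ξ) ^ (n + 1 - i)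
        - (n.choose i : ℝ) * ξ ^ i * (1 - ξ) ^ (n - i) = H i - H (i + 1) := by
    intro i hi
    have hin : i ≤ n := by
      have := Finset.mem_range.mp hi; omega
    match i with
    | 0 =>
      simp only [hH, if_pos rfl, if_neg (Nat.one_ne_zero)]
      simp [Nat.choose_zero_right, pow_succ]
      ring
    | (j + 1) =>
      have hjn : j + 1 ≤ n := hin
      have e1 : n + 1 - (j + 1) = n - j := by omega
      have e2 : n - j = (n - (j + 1)) + 1 := by omega
      have e3 : n + 1 - (j + 2) = n - (j + 1) := by omega
      have pascal : ((n + 1).choose (j + 1) : ℝ) = (n.choose j : ℝ) + (n.choose (j + 1) : ℝ) := by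
        rw [Nat.choose_succ_succ]; push_cast; ring
      simp only [hH, if_neg (Nat.succ_ne_zero j), if_neg (Nat.succ_ne_zero (j+1)),
        Nat.add_sub_cancel, e1, e3, pascal]
      rw [e2]
      ring
  have := Finset.sum_congr rfl key
  rw [Finset.sum_range_sub' H] at this
  have hsum : binCdf (n + 1) ξ k - binCdf n ξ k = H 0 - H (k + 1) := by
    rw [binCdf, binCdf, ← Finset.sum_sub_distrib, this]
  have hH0 : H 0 = 0 := by simp [hH]
  have hHk : H (k + 1) = (n.choose k : ℝ) * ξ ^ (k + 1) * (1 - ξ) ^ (n - k) := by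
    have : n + 1 - (k + 1) = n - k := by omega
    simp [hH, this]
  rw [hH0, hHk] at hsum
  linarith

lemma binCdf_succ_l (n k : ℕ) (ξ : ℝ) :
    binCdf n ξ (k + 1) = binCdf n ξ k
      + (n.choose (k + 1) : ℝ) * ξ ^ (k + 1) * (1 - ξ) ^ (n - (k + 1)) := by
  rw [binCdf, Finset.sum_range_succ]
  rfl

/-- The tail probabilities `Pr(Bin(λ, ξ) ≤ λ - ⌊λ/2⌋)` are nondecreasing along each
parity class of `λ`, provided `(1-ξ)(λ+1) ≥ (λ - ⌊λ/2⌋) + 1`. -/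
theorem stmt17 (ξ : ℝ) (hξ : ξ ∈ Set.Ioo (0 : ℝ) 1) (lam : ℕ)
    (hcond : ((lam : ℝ) - (lam / 2 : ℕ)) + 1 ≤ (1 - ξ) * ((lam : ℝ) + 1)) :
    binCdf lam ξ (lam - lam / 2) ≤ binCdf (lam + 2) ξ ((lam + 2) - (lam + 2) / 2) := by
  obtain ⟨hξ0, hξ1⟩ := hξ
  set l := lam - lam / 2 with hl
  have hll : l ≤ lam := Nat.sub_le _ _
  have hidx : (lam + 2) - (lam + 2) / 2 = l + 1 := by omega
  rw [hidx]
  have h1 := binCdf_succ_n (lam + 1) (l + 1) (by omega) ξ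
  have h2 := binCdf_succ_l (lam + 1) l ξ
  have h3 := binCdf_succ_n lam l hll ξ
  have e1 : lam + 1 - (l + 1) = lam - l := by omega
  rw [e1] at h1 h2
  have hdiff : binCdf (lam + 2) ξ (l + 1) - binCdf lam ξ l
      = ξ ^ (l + 1) * (1 - ξ) ^ (lam - l)
        * ((1 - ξ) * ((lam + 1).choose (l + 1) : ℝ) - (lam.choose l : ℝ)) := by
    have : (lam + 1) + 1 = lam + 2 := rfl
    rw [← this] at *
    rw [h1, h2, h3]
    ring
  have hconl : ((l : ℝ)) + 1 ≤ (1 - ξ) * ((lam : ℝ) + 1) := by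
    have : ((l : ℝ)) = (lam : ℝ) - ((lam / 2 : ℕ) : ℝ) := by
      rw [hl, Nat.cast_sub (Nat.div_le_self lam 2)]
    linarith
  have hchoose : ((lam + 1 : ℕ) : ℝ) * (lam.choose l : ℝ)
      = ((lam + 1).choose (l + 1) : ℝ) * ((l : ℝ) + 1) := by
    have := Nat.add_one_mul_choose_eq lam l
    exact_mod_cast congrArg (Nat.cast : ℕ → ℝ) this
  have hpos : (0 : ℝ) < (l : ℝ) + 1 := by positivity
  have hkey : (lam.choose l : ℝ) ≤ (1 - ξ) * ((lam + 1).choose (l + 1) : ℝ) := by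
    rw [← mul_le_mul_iff_of_pos_right hpos]
    calc (lam.choose l : ℝ) * ((l : ℝ) + 1)
        ≤ (lam.choose l : ℝ) * ((1 - ξ) * ((lam : ℝ) + 1)) := by
          apply mul_le_mul_of_nonneg_left hconl (Nat.cast_nonneg _)
      _ = (1 - ξ) * (((lam + 1 : ℕ) : ℝ) * (lam.choose l : ℝ)) := by push_cast; ring
      _ = (1 - ξ) * ((lam + 1).choose (l + 1) : ℝ) * ((l : ℝ) + 1) := by rw [hchoose]; ring
  have hnn : 0 ≤ ξ ^ (l + 1) * (1 - ξ) ^ (lam - l) := mul_nonneg (pow_nonneg hξ0.le _) (pow_nonneg (by linarith) _)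
  nlinarith [mul_nonneg hnn (by linarith : (0:ℝ) ≤ (1 - ξ) * ((lam + 1).choose (l + 1) : ℝ) - (lam.choose l : ℝ))]
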